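/- Assume the dΔ-equalities: in every degree, Im(d∘Δ) = Im d ∩ Ker Δ = Im Δ ∩ Ker d. Then d maps Ker Δ into Im Δ, so the natural projection Ker Δ → Ker Δ/Im Δ = H(V, Δ) is a chain map from (Ker Δ, d) to the Δ-cohomology equipped with the zero differential; moreover this projection is a quasi-isomorphism: it induces an isomorphism (Ker Δ ∩ Ker d)/(d(Ker Δ)) ≅ Ker Δ/Im Δ in every degree. -/

import Mathlib

set_option synthInstance.maxHeartbeats 400000
set_option maxHeartbeats 1000000

namespace QIAux

variable {V : Type*} [AddCommGroup V] [Module ℂ V]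

/-- `e.symm` of a homogeneous element is a single `lof`. -/
lemma symm_of_mem (𝒱 : ℤ → Submodule ℂ V) (hin : DirectSum.IsInternal 𝒱)
    {y : V} {m : ℤ} (hy : y ∈ 𝒱 m) :
    (LinearEquiv.ofBijective (DirectSum.coeLinearMap 𝒱) hin).symm y
      = DirectSum.lof ℂ ℤ (fun k => 𝒱 k) m ⟨y, hy⟩ := by
  rw [LinearEquiv.symm_apply_eq]
  exact (DirectSum.coeLinearMap_of 𝒱 m ⟨y, hy⟩).symm

/-- Components of a homogeneous map. -/
lemma comp_apply (𝒱 : ℤ → Submodule ℂ V) (hin : DirectSum.IsInternal 𝒱)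
    (f : V →ₗ[ℂ] V) (g : ℤ → ℤ) (hg : Function.Injective g)
    (hf : ∀ j, ∀ x ∈ 𝒱 j, f x ∈ 𝒱 (g j)) (x : V) (j : ℤ) :
    f (((LinearEquiv.ofBijective (DirectSum.coeLinearMap 𝒱) hin).symm x j : V))
      = (((LinearEquiv.ofBijective (DirectSum.coeLinearMap 𝒱) hin).symm (f x)) (g j) : V) := by
  set e := LinearEquiv.ofBijective (DirectSum.coeLinearMap 𝒱) hin with he
  have hx : x = e (e.symm x) := (e.apply_symm_apply x).symm
  rw [hx]
  generalize e.symm x = z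
  rw [e.symm_apply_apply]
  induction z using DirectSum.induction_on with
  | zero =>
      simp only [map_zero, DirectSum.zero_apply, ZeroMemClass.coe_zero]
  | of i u =>
      have heu : e (DirectSum.of (fun k => 𝒱 k) i u) = (u : V) := by
        exact DirectSum.coeLinearMap_of 𝒱 i u
      rw [heu]
      have := symm_of_mem 𝒱 hin (hf i (u : V) u.2)
      rw [this, DirectSum.lof_eq_of]
      by_cases hij : i = j
      · subst hij
        simp [DirectSum.of_eq_same]
      · rw [DirectSum.of_eq_of_ne _ _ _ (Ne.symm hij),
          DirectSum.of_eq_of_ne _ _ _ (fun h => hij (hg h.symm))]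
        simp
  | add z₁ z₂ h₁ h₂ =>
      simp only [map_add, DirectSum.add_apply, Submodule.coe_add] at *
      rw [h₁, h₂]

/-- Reconstruction of `x` from its components. -/
lemma sum_components (𝒱 : ℤ → Submodule ℂ V) (hin : DirectSum.IsInternal 𝒱) (x : V) :
    ∃ s : Finset ℤ, x = ∑ i ∈ s,
        (((LinearEquiv.ofBijective (DirectSum.coeLinearMap 𝒱) hin).symm x i : V)) := by
  classical
  set e := LinearEquiv.ofBijective (DirectSum.coeLinearMap 𝒱) hin with he
  refine ⟨DFinsupp.support (e.symm x), ?_⟩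
  conv_lhs => rw [← e.apply_symm_apply x]
  conv_lhs => rw [← DirectSum.sum_support_of (e.symm x)]
  rw [map_sum]
  refine Finset.sum_congr rfl fun i _ => ?_
  exact DirectSum.coeLinearMap_of 𝒱 i _

end QIAux

/-- Let `V = ⊕ₖ V^k` be a ℤ-graded complex vector space with
`d` of degree `+1`, `Δ` of degree `-1`, `d∘d = 0`, `Δ∘Δ = 0` and
`d∘Δ + Δ∘d = 0`.  Assume the `dΔ`-equalities: in every degree,
`Im (d∘Δ) = Im d ∩ Ker Δ = Im Δ ∩ Ker d`.
Then `d` maps `Ker Δ` into `Im Δ`, so the projection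
`Ker Δ → Ker Δ / Im Δ = H(V, Δ)` is a chain map from `(Ker Δ, d)` to the
`Δ`-cohomology with zero differential; moreover it is a quasi-isomorphism:
the induced map `(Ker Δ ∩ Ker d)/(d (Ker Δ)) → Ker Δ / Im Δ` is stated
elementwise to be injective and surjective in every degree. -/
theorem kerDelta_projection_quasiIso
    {V : Type*} [AddCommGroup V] [Module ℂ V]
    (𝒱 : ℤ → Submodule ℂ V)
    (hinternal : DirectSum.IsInternal 𝒱)
    (d Δ : V →ₗ[ℂ] V)
    (hd : ∀ (k : ℤ), ∀ x ∈ 𝒱 k, d x ∈ 𝒱 (k + 1))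
    (hΔ : ∀ (k : ℤ), ∀ x ∈ 𝒱 k, Δ x ∈ 𝒱 (k - 1))
    (hdd : d ∘ₗ d = 0)
    (hΔΔ : Δ ∘ₗ Δ = 0)
    (hdΔ : d ∘ₗ Δ + Δ ∘ₗ d = 0)
    (heq : ∀ k : ℤ,
      LinearMap.range (d ∘ₗ Δ) ⊓ 𝒱 k
        = LinearMap.range d ⊓ LinearMap.ker Δ ⊓ 𝒱 k)
    (heq' : ∀ k : ℤ,
      LinearMap.range (d ∘ₗ Δ) ⊓ 𝒱 k
        = LinearMap.range Δ ⊓ LinearMap.ker d ⊓ 𝒱 k) :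
    -- `d` maps `Ker Δ` into `Im Δ`: the projection is a chain map to
    -- `(H(V, Δ), 0)`
    (∀ x : V, Δ x = 0 → ∃ y : V, d x = Δ y) ∧
    -- it induces an isomorphism
    -- `(Ker Δ ∩ Ker d)/(d (Ker Δ)) ≅ Ker Δ / Im Δ` in every degree:
    (∀ k : ℤ,
      -- injectivity: a `d`- and `Δ`-closed element which is `Δ`-exact is
      -- `d`-exact with a `Δ`-closed primitive
      (∀ α ∈ 𝒱 k, Δ α = 0 → d α = 0 → (∃ β : V, α = Δ β) →
        ∃ γ : V, Δ γ = 0 ∧ α = d γ) ∧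
      -- surjectivity: every `Δ`-cohomology class has a representative
      -- killed by both `d` and `Δ`
      (∀ α ∈ 𝒱 k, Δ α = 0 →
        ∃ β ∈ 𝒱 k, Δ β = 0 ∧ d β = 0 ∧ ∃ γ : V, α - β = Δ γ)) := by
  classical
  set e := LinearEquiv.ofBijective (DirectSum.coeLinearMap 𝒱) hinternal with he
  have hΔd : ∀ x : V, Δ (d x) = - d (Δ x) := by
    intro x
    have h0 : d (Δ x) + Δ (d x) = 0 := congrFun (congrArg DFunLike.coe hdΔ) x
    rw [eq_neg_iff_add_eq_zero, add_comm]
    exact h0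
  have hΔΔ' : ∀ x : V, Δ (Δ x) = 0 := fun x =>
    congrFun (congrArg DFunLike.coe hΔΔ) x
  have hdd' : ∀ x : V, d (d x) = 0 := fun x =>
    congrFun (congrArg DFunLike.coe hdd) x
  -- any homogeneous element of ker d ∩ range d with ker Δ lands in range Δ
  have key : ∀ j : ℤ, ∀ y ∈ 𝒱 j, Δ y = 0 → d y ∈ LinearMap.range Δ := by
    intro j y hy hΔy
    have hdy : d y ∈ LinearMap.range d ⊓ LinearMap.ker Δ ⊓ 𝒱 (j + 1) := by
      refine ⟨⟨⟨y, rfl⟩, ?_⟩, hd j y hy⟩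
      simp [LinearMap.mem_ker, hΔd y, hΔy]
    rw [← heq (j + 1)] at hdy
    obtain ⟨⟨w, hw⟩, -⟩ := hdy
    refine ⟨-(d w), ?_⟩
    rw [map_neg, hΔd w, neg_neg]
    simpa using hw
  constructor
  · -- part 1
    intro x hx
    -- components of x
    have hΔcomp : ∀ j : ℤ, Δ ((e.symm x j : V)) = 0 := by
      intro j
      have h1 := QIAux.comp_apply 𝒱 hinternal Δ (fun j => j - 1)
        (fun a b h => by simpa using h) hΔ x j
      rw [← he] at h1
      rw [h1, hx]
      simp
    have hdx : d x ∈ LinearMap.range Δ := by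
      obtain ⟨s, hs⟩ := QIAux.sum_components 𝒱 hinternal x
      rw [← he] at hs
      have hsum : d x = ∑ i ∈ s, d ((e.symm x i : V)) := by
        rw [← map_sum, ← hs]
      rw [hsum]
      exact Submodule.sum_mem _ fun i _ => key i _ (e.symm x i).2 (hΔcomp i)
    obtain ⟨y, hy⟩ := hdx
    exact ⟨y, hy.symm⟩
  · intro k
    constructor
    · -- injectivity
      intro α hα hΔα hdα ⟨β, hβ⟩
      have hmem : α ∈ LinearMap.range (d ∘ₗ Δ) ⊓ 𝒱 k := by
        rw [heq' k]
        exact ⟨⟨⟨β, hβ.symm⟩, by simpa [LinearMap.mem_ker] using hdα⟩, hα⟩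
      obtain ⟨⟨γ', hγ'⟩, -⟩ := hmem
      exact ⟨Δ γ', hΔΔ' γ', by rw [← hγ']; rfl⟩
    · -- surjectivity
      intro α hα hΔα
      have hdα : d α ∈ LinearMap.range (d ∘ₗ Δ) ⊓ 𝒱 (k + 1) := by
        rw [heq (k + 1)]
        refine ⟨⟨⟨α, rfl⟩, ?_⟩, hd k α hα⟩
        simp [LinearMap.mem_ker, hΔd α, hΔα]
      obtain ⟨⟨γ, hγ⟩, hdα𝒱⟩ := hdα
      -- replace γ by its (k+1)-component
      set γ' : V := (e.symm γ (k + 1) : V) with hγ'def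
      have hγ'mem : γ' ∈ 𝒱 (k + 1) := (e.symm γ (k + 1)).2
      have hdΔγ' : d (Δ γ') = d α := by
        have hcomp := QIAux.comp_apply 𝒱 hinternal (d ∘ₗ Δ) (fun j => j)
          (fun a b h => h)
          (fun j x hx => by
            have h1 := hΔ j x hx
            have h2 := hd (j - 1) _ h1
            simpa using h2) γ (k + 1)
        rw [← he] at hcomp
        have hsymm : e.symm (d (Δ γ)) =
            DirectSum.lof ℂ ℤ (fun k => 𝒱 k) (k + 1) ⟨d α, hdα𝒱⟩ := by
          have hdΔγ : d (Δ γ) = d α := hγ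
          rw [hdΔγ, he]
          exact QIAux.symm_of_mem 𝒱 hinternal hdα𝒱
        simp only [LinearMap.comp_apply] at hcomp hsymm
        rw [hsymm] at hcomp
        rw [← hγ'def] at hcomp
        rw [hcomp, DirectSum.lof_eq_of, DirectSum.of_eq_same]
      have hΔγ'mem : Δ γ' ∈ 𝒱 k := by
        have := hΔ (k + 1) γ' hγ'mem
        simpa using this
      refine ⟨α - Δ γ', Submodule.sub_mem _ hα hΔγ'mem, ?_, ?_, ⟨γ', by abel⟩⟩
      · simp [map_sub, hΔα, hΔΔ' γ']
      · simp [map_sub, hdΔγ']
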